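/- arXiv:2103.12470 — 3 statements merged into one kernel-verified Lean document; each statement's English description precedes it below -/
import Mathlib

section
/- Fix L > 0 and let 0 < k < 2π/L. Define G^{0,k} : ℝ³ → ℂ by G^{0,k}(x) = e^{i k |x₃|}/(2 i k L²) − Σ_{q ∈ Λ*\{0}} e^{i q·(x₁,x₂)} e^{−√(|q|²−k²)|x₃|}/(2L²√(|q|²−k²)), where Λ* = {(2π/L)q : q ∈ ℤ²} and the sum is a tsum over ℤ² \ {0}. Then for every x ∈ ℝ³ with x₃ ≠ 0, the complex conjugate satisfies conj(G^{0,k}(x)) = G^{0,k}(x) − cos(k|x₃|)/(i k L²). -/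
open MeasureTheory

noncomputable section

abbrev R2 : Type := EuclideanSpace ℝ (Fin 2)
abbrev R3 : Type := EuclideanSpace ℝ (Fin 3)

/-- The dual lattice vector `(2π/L) q` for `q ∈ ℤ²`. -/
def dualVec (L : ℝ) (q : ℤ × ℤ) : R2 :=
  (2 * Real.pi / L) • (EuclideanSpace.equiv (Fin 2) ℝ).symm ![(q.1 : ℝ), (q.2 : ℝ)]

/-- The evanescent mode associated to `q ∈ Λ* \ {0}`. -/
def evanescent (L : ℝ) (α : R2) (k : ℝ) (q : ℤ × ℤ) (x : R3) : ℂ :=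
  Complex.exp (Complex.I * (((α + dualVec L q) 0 * x 0 + (α + dualVec L q) 1 * x 1 : ℝ) : ℂ)) *
    Complex.exp ((-(Real.sqrt (‖α + dualVec L q‖ ^ 2 - k ^ 2) * |x 2|) : ℝ) : ℂ) /
      ((2 * L ^ 2 * Real.sqrt (‖α + dualVec L q‖ ^ 2 - k ^ 2) : ℝ) : ℂ)

/-- `k₃ = √(k² − |α|²)`. -/
def kthree (α : R2) (k : ℝ) : ℝ := Real.sqrt (k ^ 2 - ‖α‖ ^ 2)

/-- The quasiperiodic Green's function `G^{α,k}`, via its spectral representation. -/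
def Gf (L : ℝ) (α : R2) (k : ℝ) (x : R3) : ℂ :=
  Complex.exp (Complex.I * ((α 0 * x 0 + α 1 * x 1 : ℝ) : ℂ)) *
      Complex.exp (Complex.I * ((kthree α k * |x 2| : ℝ) : ℂ)) /
      (2 * Complex.I * ((kthree α k : ℝ) : ℂ) * ((L : ℝ) : ℂ) ^ 2) -
    ∑' q : {q : ℤ × ℤ // q ≠ 0}, evanescent L α k q.1 x

lemma dualVec_neg (L : ℝ) (q : ℤ × ℤ) : dualVec L (-q) = -dualVec L q := by
  unfold dualVec
  ext i
  fin_cases i <;> simp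

lemma conj_evanescent (L : ℝ) (k : ℝ) (q : ℤ × ℤ) (x : R3) :
    (starRingEnd ℂ) (evanescent L 0 k q x) = evanescent L 0 k (-q) x := by
  unfold evanescent
  rw [dualVec_neg]
  simp only [zero_add, norm_neg]
  rw [map_div₀, map_mul]
  rw [← Complex.exp_conj, ← Complex.exp_conj]
  congr 1
  · congr 1
    · rw [map_mul, Complex.conj_I, Complex.conj_ofReal]
      push_cast
      ring_nf
      congr 1
      simp [neg_mul]
      ring
    · rw [Complex.conj_ofReal]
  · rw [Complex.conj_ofReal]

/-- For `0 < k < 2π/L`, the quasiperiodic Green's function `G^{0,k}` at quasiperiodicity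
`α = 0` satisfies `conj(G^{0,k}(x)) = G^{0,k}(x) − cos(k|x₃|)/(i k L²)` for `x₃ ≠ 0`. -/
theorem conj_Gzerok (L : ℝ) (hL : 0 < L) (k : ℝ) (hk : 0 < k) (hk2 : k < 2 * Real.pi / L)
    (x : R3) (hx : x 2 ≠ 0) :
    (starRingEnd ℂ) (Gf L 0 k x) =
      Gf L 0 k x - ((Real.cos (k * |x 2|) : ℝ) : ℂ) / (Complex.I * (k : ℂ) * ((L : ℝ) : ℂ) ^ 2) := by
  have hsum : (starRingEnd ℂ) (∑' q : {q : ℤ × ℤ // q ≠ 0}, evanescent L 0 k q.1 x)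
      = ∑' q : {q : ℤ × ℤ // q ≠ 0}, evanescent L 0 k q.1 x := by
    rw [show (starRingEnd ℂ) (∑' q : {q : ℤ × ℤ // q ≠ 0}, evanescent L 0 k q.1 x)
      = star (∑' q : {q : ℤ × ℤ // q ≠ 0}, evanescent L 0 k q.1 x) from rfl, tsum_star]
    let e : {q : ℤ × ℤ // q ≠ 0} ≃ {q : ℤ × ℤ // q ≠ 0} :=
      (Equiv.neg (ℤ × ℤ)).subtypeEquiv (fun q => by simp)
    rw [← e.tsum_eq (fun q => evanescent L 0 k q.1 x)]
    refine tsum_congr fun q => ?_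
    have he : ((e q : {q : ℤ × ℤ // q ≠ 0}) : ℤ × ℤ) = -q.1 := rfl
    rw [he, ← conj_evanescent L k q.1 x]; rfl
  have hk3 : kthree 0 k = k := by
    unfold kthree
    simp [Real.sqrt_sq hk.le]
  unfold Gf
  rw [map_sub, hsum, hk3]
  rw [sub_right_comm]
  congr 1
  simp only [PiLp.zero_apply, zero_mul, add_zero, Complex.ofReal_zero, mul_zero,
    Complex.exp_zero, one_mul]
  rw [map_div₀, ← Complex.exp_conj, map_mul, Complex.conj_I, Complex.conj_ofReal]
  have hL' : (L : ℂ) ≠ 0 := by exact_mod_cast hL.ne'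
  have hk' : (k : ℂ) ≠ 0 := by exact_mod_cast hk.ne'
  have hcos : ((Real.cos (k * |x 2|) : ℝ) : ℂ)
      = (Complex.exp (Complex.I * (k * |x 2| : ℝ)) + Complex.exp (-Complex.I * (k * |x 2| : ℝ))) / 2 := by
    rw [Complex.ofReal_cos, Complex.cos]
    ring_nf
  rw [hcos]
  have h2 : (starRingEnd ℂ) (2 * Complex.I * (k : ℂ) * (L : ℂ) ^ 2)
      = -(2 * Complex.I * (k : ℂ) * (L : ℂ) ^ 2) := by
    rw [map_mul, map_mul, map_mul, Complex.conj_I, Complex.conj_ofReal, map_pow,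
      Complex.conj_ofReal, map_ofNat]
    ring
  rw [h2]
  have hD : (2 * Complex.I * (k : ℂ) * (L : ℂ) ^ 2) ≠ 0 := by
    simp [Complex.I_ne_zero, hk', hL']
  have hD2 : (2 * (Complex.I * (k : ℂ) * (L : ℂ) ^ 2)) ≠ 0 := by
    simp [Complex.I_ne_zero, hk', hL']
  field_simp [Complex.I_ne_zero]
  ring
end
end

section
/- Fix L > 0, let Λ* = {(2π/L)q : q ∈ ℤ²}, let α ∈ ℝ² and k > 0 satisfy |α| < k < |α + q| for every q ∈ Λ* \ {0}, set k₃ = √(k² − |α|²), k₊ = (α₁, α₂, k₃), k₋ = (α₁, α₂, −k₃), and let G^{α,k} be the quasiperiodic Green's function defined by its spectral representation. Let D ⊂ ℝ³ be a bounded set, let μ be the 2-dimensional Hausdorff measure on ℝ³ restricted to the topological boundary ∂D, choose R > 0 with ∂D ⊆ {y : |y₃| ≤ R}, and let φ : ℝ³ → ℂ be μ-integrable. Then there exist constants C > 0 and c > 0 such that: for every x with x₃ ≥ R + 1, |∫_{∂D} G^{α,k}(x−y) φ(y) dμ(y) − (e^{i k₊·x}/(2 i k₃ L²)) ∫_{∂D}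 e^{−i k₊·y} φ(y) dμ(y)| ≤ C e^{−c x₃}; and for every x with x₃ ≤ −(R + 1), |∫_{∂D} G^{α,k}(x−y) φ(y) dμ(y) − (e^{i k₋·x}/(2 i k₃ L²)) ∫_{∂D} e^{−i k₋·y} φ(y) dμ(y)| ≤ C e^{c x₃}. -/
open MeasureTheory

noncomputable section

/-- `k₊·x` (sign `+1`) and `k₋·x` (sign `−1`) where `k₊ = (α₁,α₂,k₃)`, `k₋ = (α₁,α₂,−k₃)`. -/
def kdot (α : R2) (k : ℝ) (s : ℝ) (x : R3) : ℝ :=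
  α 0 * x 0 + α 1 * x 1 + s * kthree α k * x 2

namespace FarFieldAux

def beta (L : ℝ) (α : R2) (k : ℝ) (q : ℤ × ℤ) : ℝ :=
  Real.sqrt (‖α + dualVec L q‖ ^ 2 - k ^ 2)

lemma beta_pos {L : ℝ} {α : R2} {k : ℝ} (hk : 0 < k) {q : ℤ × ℤ}
    (h : k < ‖α + dualVec L q‖) : 0 < beta L α k q :=
  Real.sqrt_pos.2 (by nlinarith)

lemma norm_evanescent {L : ℝ} (hL : 0 < L) {α : R2} {k : ℝ} {q : ℤ × ℤ}
    (hb : 0 < beta L α k q) (z : R3) :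
    ‖evanescent L α k q z‖
      = Real.exp (-(beta L α k q * |z 2|)) / (2 * L ^ 2 * beta L α k q) := by
  have hd : (0:ℝ) < 2 * L ^ 2 * beta L α k q := by positivity
  simp only [evanescent, beta] at *
  rw [norm_div, norm_mul]
  simp [Complex.norm_exp, Complex.mul_re, Complex.I_re, Complex.I_im,
    Complex.ofReal_re, Complex.ofReal_im, Complex.norm_real, abs_of_pos hd, abs_of_pos hb]

lemma sub_apply (x y : R3) (i : Fin 3) : (x - y) i = x i - y i := rfl

lemma cont_apply (i : Fin 3) : Continuous fun z : R3 => z i :=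
  (EuclideanSpace.proj (𝕜 := ℝ) i).continuous

lemma evanescent_continuous (L : ℝ) (α : R2) (k : ℝ) (q : ℤ × ℤ) :
    Continuous (evanescent L α k q) := by
  unfold evanescent
  apply Continuous.div_const
  apply Continuous.mul
  · exact Complex.continuous_exp.comp (continuous_const.mul (Complex.continuous_ofReal.comp
      (((continuous_const.mul (cont_apply 0)).add (continuous_const.mul (cont_apply 1))))))
  · exact Complex.continuous_exp.comp (Complex.continuous_ofReal.comp
      ((continuous_const.mul (continuous_abs.comp (cont_apply 2))).neg))

lemma beta_lower {L : ℝ} (hL : 0 < L) {α : R2} {k : ℝ} (hk : 0 < k)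
    {q : ℤ × ℤ} (h : k < ‖α + dualVec L q‖) :
    Real.pi / L * (|(q.1 : ℝ)| + |(q.2 : ℝ)|) - (‖α‖ + k) ≤ beta L α k q := by
  have hπ : (0:ℝ) < Real.pi := Real.pi_pos
  have hv : ‖dualVec L q‖ = 2 * Real.pi / L * Real.sqrt ((q.1:ℝ)^2 + (q.2:ℝ)^2) := by
    unfold dualVec
    rw [norm_smul]
    have h1 : ‖(EuclideanSpace.equiv (Fin 2) ℝ).symm ![(q.1 : ℝ), (q.2 : ℝ)]‖
        = Real.sqrt ((q.1:ℝ)^2 + (q.2:ℝ)^2) := by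
      rw [EuclideanSpace.norm_eq]
      congr 1
      simp [Fin.sum_univ_two, Real.norm_eq_abs, sq_abs]
    rw [h1, Real.norm_eq_abs, abs_of_pos (by positivity)]
  have hsqrt : (|(q.1:ℝ)| + |(q.2:ℝ)|) / 2 ≤ Real.sqrt ((q.1:ℝ)^2 + (q.2:ℝ)^2) := by
    rw [Real.le_sqrt (by positivity) (by positivity)]
    nlinarith [sq_nonneg (|(q.1:ℝ)| - |(q.2:ℝ)|), sq_abs ((q.1:ℝ)), sq_abs ((q.2:ℝ)),
      abs_nonneg ((q.1:ℝ)), abs_nonneg ((q.2:ℝ))]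
  have htri : ‖dualVec L q‖ - ‖α‖ ≤ ‖α + dualVec L q‖ := by
    have h' := norm_add_le (α + dualVec L q) (-α)
    rw [norm_neg] at h'
    have h'' : α + dualVec L q + -α = dualVec L q := by abel
    rw [h''] at h'
    linarith
  have hβ : ‖α + dualVec L q‖ - k ≤ beta L α k q := by
    have hnn : (0:ℝ) ≤ ‖α + dualVec L q‖ ^ 2 - k ^ 2 := by nlinarith
    have h2 := Real.sq_sqrt hnn
    have h3 := Real.sqrt_nonneg (‖α + dualVec L q‖ ^ 2 - k ^ 2)
    unfold beta
    nlinarith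
  calc Real.pi / L * (|(q.1:ℝ)| + |(q.2:ℝ)|) - (‖α‖ + k)
      = 2 * Real.pi / L * ((|(q.1:ℝ)| + |(q.2:ℝ)|) / 2) - ‖α‖ - k := by ring
    _ ≤ 2 * Real.pi / L * Real.sqrt ((q.1:ℝ)^2 + (q.2:ℝ)^2) - ‖α‖ - k := by
        have := mul_le_mul_of_nonneg_left hsqrt (by positivity : (0:ℝ) ≤ 2 * Real.pi / L)
        linarith
    _ = ‖dualVec L q‖ - ‖α‖ - k := by rw [hv]
    _ ≤ ‖α + dualVec L q‖ - k := by linarith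
    _ ≤ beta L α k q := hβ

lemma summable_int_exp {a : ℝ} (ha : 0 < a) :
    Summable (fun n : ℤ => Real.exp (-(a * |(n : ℝ)|))) := by
  have hgeo : Summable (fun n : ℕ => Real.exp (-a) ^ n) :=
    summable_geometric_of_lt_one (Real.exp_nonneg _) (by
      rw [Real.exp_lt_one_iff]; linarith)
  apply Summable.of_nat_of_neg
  · refine hgeo.congr fun n => ?_
    rw [← Real.exp_nat_mul]
    congr 1
    rw [Int.cast_natCast, Nat.abs_cast]
    ring
  · refine hgeo.congr fun n => ?_
    rw [← Real.exp_nat_mul]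
    congr 1
    push_cast
    rw [abs_neg, abs_of_nonneg (by positivity : (0:ℝ) ≤ (n:ℝ))]
    ring

lemma summable_pair {a : ℝ} (ha : 0 < a) :
    Summable (fun q : ℤ × ℤ => Real.exp (-(a * (|(q.1:ℝ)| + |(q.2:ℝ)|)))) := by
  have h := (summable_int_exp ha).mul_of_nonneg (summable_int_exp ha)
    (Pi.le_def.mpr fun n => Real.exp_nonneg _) (Pi.le_def.mpr fun n => Real.exp_nonneg _)
  refine h.congr fun q => ?_
  rw [← Real.exp_add]
  congr 1
  ring

lemma summable_expbeta {L : ℝ} {α : R2} {k : ℝ} (hL : 0 < L) (hk : 0 < k)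
    (h2 : ∀ q : ℤ × ℤ, q ≠ 0 → k < ‖α + dualVec L q‖) :
    Summable (fun q : {q : ℤ × ℤ // q ≠ 0} => Real.exp (-beta L α k q.1)) := by
  have hπL : (0:ℝ) < Real.pi / L := by positivity
  have base := (((summable_pair hπL).mul_left (Real.exp (‖α‖ + k))).subtype
    {q : ℤ × ℤ | q ≠ 0})
  refine Summable.of_nonneg_of_le (fun _ => Real.exp_nonneg _) (fun q => ?_) base
  have hlow := beta_lower hL hk (h2 q.1 q.2)
  show Real.exp (-beta L α k q.1)
      ≤ Real.exp (‖α‖ + k) * Real.exp (-(Real.pi / L * (|((q.1:ℤ×ℤ).1:ℝ)| + |((q.1:ℤ×ℤ).2:ℝ)|)))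
  rw [← Real.exp_add]
  apply Real.exp_le_exp.2
  linarith

lemma exists_c0 {L : ℝ} {α : R2} {k : ℝ} (hL : 0 < L) (hk : 0 < k)
    (h2 : ∀ q : ℤ × ℤ, q ≠ 0 → k < ‖α + dualVec L q‖) :
    ∃ c0 : ℝ, 0 < c0 ∧ ∀ q : ℤ × ℤ, q ≠ 0 → c0 ≤ beta L α k q := by
  have hπ : (0:ℝ) < Real.pi := Real.pi_pos
  set N : ℕ := ⌈L / Real.pi * (‖α‖ + k + 1)⌉₊ with hN
  set F : Finset (ℤ × ℤ) := (Finset.Icc (-(N:ℤ), -(N:ℤ)) ((N:ℤ), (N:ℤ))).erase 0 with hF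
  set S : Finset ℝ := insert (1:ℝ) (F.image (beta L α k)) with hS
  have hSne : S.Nonempty := ⟨1, Finset.mem_insert_self _ _⟩
  have hminle1 : S.min' hSne ≤ 1 := Finset.min'_le _ 1 (Finset.mem_insert_self _ _)
  refine ⟨S.min' hSne, ?_, ?_⟩
  · have hmem := S.min'_mem hSne
    rcases Finset.mem_insert.1 hmem with h | h
    · rw [h]; norm_num
    · obtain ⟨q, hqF, hq⟩ := Finset.mem_image.1 h
      rw [← hq]
      exact beta_pos hk (h2 q (Finset.ne_of_mem_erase hqF))
  · intro q hq
    by_cases hqF : q ∈ F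
    · exact Finset.min'_le _ _ (Finset.mem_insert_of_mem (Finset.mem_image_of_mem _ hqF))
    · have hq' : q ∉ Finset.Icc (-(N:ℤ), -(N:ℤ)) ((N:ℤ), (N:ℤ)) := by
        intro hc; exact hqF (Finset.mem_erase.2 ⟨hq, hc⟩)
      rw [Finset.mem_Icc] at hq'
      have hbig : (N:ℤ) + 1 ≤ |q.1| ∨ (N:ℤ) + 1 ≤ |q.2| := by
        by_contra hcon
        push_neg at hcon
        obtain ⟨ha, hb⟩ := hcon
        have ha' := abs_le.1 (by omega : |q.1| ≤ (N:ℤ))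
        have hb' := abs_le.1 (by omega : |q.2| ≤ (N:ℤ))
        exact hq' ⟨⟨ha'.1, hb'.1⟩, ⟨ha'.2, hb'.2⟩⟩
      have hbigR : (N:ℝ) + 1 ≤ |(q.1:ℝ)| + |(q.2:ℝ)| := by
        rcases hbig with h | h
        · have h' : (N:ℝ) + 1 ≤ |(q.1:ℝ)| := by exact_mod_cast h
          linarith [abs_nonneg ((q.2:ℝ))]
        · have h' : (N:ℝ) + 1 ≤ |(q.2:ℝ)| := by exact_mod_cast h
          linarith [abs_nonneg ((q.1:ℝ))]
      have hNval : L / Real.pi * (‖α‖ + k + 1) ≤ (N:ℝ) := Nat.le_ceil _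
      have h1le : (1:ℝ) ≤ beta L α k q := by
        have hlow := beta_lower hL hk (h2 q hq)
        have hπL : (0:ℝ) < Real.pi / L := by positivity
        have h3 : Real.pi / L * (L / Real.pi * (‖α‖ + k + 1)) = ‖α‖ + k + 1 := by
          field_simp
        have step : ‖α‖ + k + 1 ≤ Real.pi / L * (|(q.1:ℝ)| + |(q.2:ℝ)|) := by
          calc ‖α‖ + k + 1 = Real.pi / L * (L / Real.pi * (‖α‖ + k + 1)) := h3.symm
            _ ≤ Real.pi / L * ((N:ℝ) + 1) := by
                apply mul_le_mul_of_nonneg_left (by linarith) hπL.le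
            _ ≤ Real.pi / L * (|(q.1:ℝ)| + |(q.2:ℝ)|) := by
                apply mul_le_mul_of_nonneg_left hbigR hπL.le
        linarith
      linarith

lemma tsum_bound {L : ℝ} {α : R2} {k : ℝ} (hL : 0 < L) (hk : 0 < k)
    (h2 : ∀ q : ℤ × ℤ, q ≠ 0 → k < ‖α + dualVec L q‖) :
    ∃ c > (0:ℝ), ∃ K ≥ (0:ℝ),
      (∀ z : R3, 1 ≤ |z 2| →
        ‖∑' q : {q : ℤ × ℤ // q ≠ 0}, evanescent L α k q.1 z‖ ≤ K * Real.exp (-(c * |z 2|))) ∧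
      ContinuousOn (fun z : R3 => ∑' q : {q : ℤ × ℤ // q ≠ 0}, evanescent L α k q.1 z)
        {z : R3 | 1 ≤ |z 2|} := by
  obtain ⟨c0, hc0, hc0b⟩ := exists_c0 hL hk h2
  set M := ∑' q : {q : ℤ × ℤ // q ≠ 0}, Real.exp (-beta L α k q.1) with hM
  have hM0 : 0 ≤ M := tsum_nonneg fun q => Real.exp_nonneg _
  have hsumM := summable_expbeta hL hk h2
  refine ⟨c0, hc0, Real.exp c0 / (2 * L ^ 2 * c0) * M, by positivity, fun z hz => ?_, ?_⟩
  · set t := |z 2| with ht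
    have ht0 : (0:ℝ) ≤ t := abs_nonneg _
    have hterm : ∀ q : {q : ℤ × ℤ // q ≠ 0},
        ‖evanescent L α k q.1 z‖
          ≤ Real.exp c0 / (2 * L ^ 2 * c0) * Real.exp (-(c0 * t)) * Real.exp (-beta L α k q.1) := by
      intro q
      have hb := beta_pos hk (h2 q.1 q.2)
      have hble := hc0b q.1 q.2
      rw [norm_evanescent hL hb]
      have e1 : Real.exp (-(beta L α k q.1 * t))
          ≤ Real.exp c0 * Real.exp (-(c0 * t)) * Real.exp (-beta L α k q.1) := by
        rw [← Real.exp_add, ← Real.exp_add]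
        apply Real.exp_le_exp.2
        nlinarith
      calc Real.exp (-(beta L α k q.1 * t)) / (2 * L ^ 2 * beta L α k q.1)
          ≤ (Real.exp c0 * Real.exp (-(c0 * t)) * Real.exp (-beta L α k q.1))
              / (2 * L ^ 2 * c0) := by
            apply div_le_div₀ (by positivity) e1 (by positivity)
            have : (0:ℝ) ≤ 2 * L ^ 2 := by positivity
            nlinarith
        _ = Real.exp c0 / (2 * L ^ 2 * c0) * Real.exp (-(c0 * t))
              * Real.exp (-beta L α k q.1) := by ring
    have hsumc : Summable (fun q : {q : ℤ × ℤ // q ≠ 0} =>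
        Real.exp c0 / (2 * L ^ 2 * c0) * Real.exp (-(c0 * t)) * Real.exp (-beta L α k q.1)) := by
      exact hsumM.mul_left (Real.exp c0 / (2 * L ^ 2 * c0) * Real.exp (-(c0 * t)))
    have hsum_norm : Summable (fun q : {q : ℤ × ℤ // q ≠ 0} => ‖evanescent L α k q.1 z‖) :=
      Summable.of_nonneg_of_le (fun q => norm_nonneg _) hterm hsumc
    calc ‖∑' q : {q : ℤ × ℤ // q ≠ 0}, evanescent L α k q.1 z‖
        ≤ ∑' q : {q : ℤ × ℤ // q ≠ 0}, ‖evanescent L α k q.1 z‖ :=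
          norm_tsum_le_tsum_norm hsum_norm
      _ ≤ ∑' q : {q : ℤ × ℤ // q ≠ 0},
            Real.exp c0 / (2 * L ^ 2 * c0) * Real.exp (-(c0 * t)) * Real.exp (-beta L α k q.1) :=
          Summable.tsum_le_tsum hterm hsum_norm hsumc
      _ = Real.exp c0 / (2 * L ^ 2 * c0) * Real.exp (-(c0 * t)) * M := by
          rw [tsum_mul_left]
      _ = Real.exp c0 / (2 * L ^ 2 * c0) * M * Real.exp (-(c0 * t)) := by ring
  · apply continuousOn_tsum
      (u := fun q : {q : ℤ × ℤ // q ≠ 0} => Real.exp (-beta L α k q.1) / (2 * L ^ 2 * c0))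
    · exact fun q => (evanescent_continuous L α k q.1).continuousOn
    · exact hsumM.div_const _
    · intro q z hz
      have hb := beta_pos hk (h2 q.1 q.2)
      have hble := hc0b q.1 q.2
      rw [norm_evanescent hL hb]
      apply div_le_div₀ (Real.exp_nonneg _) ?_ (by positivity) ?_
      · apply Real.exp_le_exp.2
        have : (1:ℝ) ≤ |z 2| := hz
        nlinarith
      · have : (0:ℝ) ≤ 2 * L ^ 2 := by positivity
        nlinarith

end FarFieldAux

lemma norm_exp_neg_I_real (r : ℝ) : ‖Complex.exp (-(Complex.I * (r:ℂ)))‖ = 1 := by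
  rw [Complex.norm_exp]
  simp [Complex.mul_re]

lemma kdot_continuous (α : R2) (k : ℝ) (s : ℝ) : Continuous (kdot α k s) := by
  unfold kdot
  exact ((continuous_const.mul (FarFieldAux.cont_apply 0)).add
    (continuous_const.mul (FarFieldAux.cont_apply 1))).add
    (continuous_const.mul (FarFieldAux.cont_apply 2))

/-- Far-field behaviour of the quasiperiodic single layer potential in the first radiation
continuum (Lemma 4.1 of the paper): up to exponentially decaying terms, it behaves as a
single outgoing plane wave in each of the directions `x₃ → ±∞`. -/
theorem singleLayer_farfield (L : ℝ) (hL : 0 < L) (α : R2) (k : ℝ) (hk : 0 < k)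
    (h1 : ‖α‖ < k) (h2 : ∀ q : ℤ × ℤ, q ≠ 0 → k < ‖α + dualVec L q‖)
    (D : Set R3) (hD : Bornology.IsBounded D)
    (R : ℝ) (hR : 0 < R) (hDR : frontier D ⊆ {y : R3 | |y 2| ≤ R})
    (φ : R3 → ℂ) (hφ : Integrable φ ((μH[2] : Measure R3).restrict (frontier D))) :
    ∃ C > (0 : ℝ), ∃ c > (0 : ℝ),
      (∀ x : R3, R + 1 ≤ x 2 →
        ‖(∫ y, Gf L α k (x - y) * φ y ∂((μH[2] : Measure R3).restrict (frontier D))) -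
            Complex.exp (Complex.I * ((kdot α k 1 x : ℝ) : ℂ)) /
              (2 * Complex.I * ((kthree α k : ℝ) : ℂ) * ((L : ℝ) : ℂ) ^ 2) *
            ∫ y, Complex.exp (-(Complex.I * ((kdot α k 1 y : ℝ) : ℂ))) * φ y
              ∂((μH[2] : Measure R3).restrict (frontier D))‖ ≤
          C * Real.exp (-c * x 2)) ∧
      (∀ x : R3, x 2 ≤ -(R + 1) →
        ‖(∫ y, Gf L α k (x - y) * φ y ∂((μH[2] : Measure R3).restrict (frontier D))) -
            Complex.exp (Complex.I * ((kdot α k (-1) x : ℝ) : ℂ)) /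
              (2 * Complex.I * ((kthree α k : ℝ) : ℂ) * ((L : ℝ) : ℂ) ^ 2) *
            ∫ y, Complex.exp (-(Complex.I * ((kdot α k (-1) y : ℝ) : ℂ))) * φ y
              ∂((μH[2] : Measure R3).restrict (frontier D))‖ ≤
          C * Real.exp (c * x 2)) := by
  classical
  set μ : Measure R3 := (μH[2] : Measure R3).restrict (frontier D) with hμdef
  obtain ⟨c, hc, K, hK, hKb, hKcont⟩ := FarFieldAux.tsum_bound hL hk h2
  have hfront : MeasurableSet (frontier D) := isClosed_frontier.measurableSet
  set Iφ : ℝ := ∫ y, ‖φ y‖ ∂μ with hIφ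
  have hIφ0 : 0 ≤ Iφ := integral_nonneg fun y => norm_nonneg _
  set C : ℝ := K * Real.exp (c * R) * Iφ + 1 with hC
  have hC0 : 0 < C := by positivity
  have hCb : K * Real.exp (c * R) * Iφ ≤ C := by rw [hC]; linarith
  have key : ∀ (s : ℝ) (x : R3) (E : ℝ), 0 < E →
      (∀ y, y ∈ frontier D → 1 ≤ |x 2 - y 2|) →
      (∀ y, y ∈ frontier D →
        kthree α k * |x 2 - y 2| = s * kthree α k * x 2 - s * kthree α k * y 2) →
      (∀ y, y ∈ frontier D → Real.exp (-(c * |x 2 - y 2|)) ≤ Real.exp (c * R) * E) →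
      ‖(∫ y, Gf L α k (x - y) * φ y ∂μ) -
          Complex.exp (Complex.I * ((kdot α k s x : ℝ) : ℂ)) /
            (2 * Complex.I * ((kthree α k : ℝ) : ℂ) * ((L : ℝ) : ℂ) ^ 2) *
          ∫ y, Complex.exp (-(Complex.I * ((kdot α k s y : ℝ) : ℂ))) * φ y ∂μ‖ ≤ C * E := by
    intro s x E hE hsep hpw hdecay
    set pc : ℂ := Complex.exp (Complex.I * ((kdot α k s x : ℝ) : ℂ)) /
        (2 * Complex.I * ((kthree α k : ℝ) : ℂ) * ((L : ℝ) : ℂ) ^ 2) with hpc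
    have hinner : Integrable
        (fun y => Complex.exp (-(Complex.I * ((kdot α k s y : ℝ) : ℂ))) * φ y) μ := by
      apply hφ.bdd_mul (c := 1)
      · exact (Complex.continuous_exp.comp
          ((continuous_const.mul (Complex.continuous_ofReal.comp
            (kdot_continuous α k s))).neg)).aestronglyMeasurable
      · exact Filter.Eventually.of_forall fun y => le_of_eq (norm_exp_neg_I_real _)
    have hA : Integrable (fun y => pc *
        (Complex.exp (-(Complex.I * ((kdot α k s y : ℝ) : ℂ))) * φ y)) μ :=
      hinner.const_mul pc
    have hTmeas : AEStronglyMeasurable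
        (fun y : R3 => ∑' q : {q : ℤ × ℤ // q ≠ 0}, evanescent L α k q.1 (x - y)) μ := by
      apply ContinuousOn.aestronglyMeasurable _ hfront
      have hmap : Set.MapsTo (fun y : R3 => x - y) (frontier D) {z : R3 | 1 ≤ |z 2|} := by
        intro y hy
        show (1:ℝ) ≤ |(x - y) 2|
        rw [FarFieldAux.sub_apply]
        exact hsep y hy
      exact hKcont.comp (continuous_const.sub continuous_id).continuousOn hmap
    have hTbound : ∀ y ∈ frontier D,
        ‖∑' q : {q : ℤ × ℤ // q ≠ 0}, evanescent L α k q.1 (x - y)‖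
          ≤ K * Real.exp (-(c * |x 2 - y 2|)) := by
      intro y hy
      have h := hKb (x - y) (by rw [FarFieldAux.sub_apply]; exact hsep y hy)
      rwa [FarFieldAux.sub_apply] at h
    have hB : Integrable
        (fun y => (∑' q : {q : ℤ × ℤ // q ≠ 0}, evanescent L α k q.1 (x - y)) * φ y) μ := by
      apply Integrable.mono (hφ.norm.const_mul K) (hTmeas.mul hφ.1)
      rw [hμdef]
      filter_upwards [ae_restrict_mem hfront] with y hy
      have h1 := hTbound y hy
      have h2' : Real.exp (-(c * |x 2 - y 2|)) ≤ 1 := by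
        rw [← Real.exp_zero]
        apply Real.exp_le_exp.2
        have := hsep y hy
        nlinarith
      have : ‖∑' q : {q : ℤ × ℤ // q ≠ 0}, evanescent L α k q.1 (x - y)‖ ≤ K := by
        nlinarith [norm_nonneg (∑' q : {q : ℤ × ℤ // q ≠ 0}, evanescent L α k q.1 (x - y))]
      simp only [Pi.mul_apply, norm_mul, Real.norm_eq_abs, abs_of_nonneg hK, norm_norm,
        abs_norm]
      exact mul_le_mul_of_nonneg_right this (norm_nonneg _)
    have hsplit : ∀ᵐ y ∂μ, Gf L α k (x - y) * φ y =
        pc * (Complex.exp (-(Complex.I * ((kdot α k s y : ℝ) : ℂ))) * φ y) -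
          (∑' q : {q : ℤ × ℤ // q ≠ 0}, evanescent L α k q.1 (x - y)) * φ y := by
      rw [hμdef]
      filter_upwards [ae_restrict_mem hfront] with y hy
      have harg : (α 0 * ((x - y) 0) + α 1 * ((x - y) 1) : ℝ) + kthree α k * |(x - y) 2|
          = kdot α k s x - kdot α k s y := by
        have h := hpw y hy
        rw [FarFieldAux.sub_apply, FarFieldAux.sub_apply, FarFieldAux.sub_apply]
        simp only [kdot]
        rw [h]
        ring
      have hcast : ((α 0 * ((x - y) 0) + α 1 * ((x - y) 1) : ℝ) : ℂ)
            + ((kthree α k * |(x - y) 2| : ℝ) : ℂ)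
          = ((kdot α k s x : ℝ) : ℂ) - ((kdot α k s y : ℝ) : ℂ) := by
        rw [← Complex.ofReal_add, ← Complex.ofReal_sub]
        exact_mod_cast congrArg Complex.ofReal harg
      have hpw' : Complex.exp (Complex.I * ((α 0 * ((x - y) 0) + α 1 * ((x - y) 1) : ℝ) : ℂ)) *
          Complex.exp (Complex.I * ((kthree α k * |(x - y) 2| : ℝ) : ℂ))
          = Complex.exp (Complex.I * ((kdot α k s x : ℝ) : ℂ)) *
            Complex.exp (-(Complex.I * ((kdot α k s y : ℝ) : ℂ))) := by
        rw [← Complex.exp_add, ← Complex.exp_add]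
        congr 1
        linear_combination Complex.I * hcast
      show Gf L α k (x - y) * φ y = _
      unfold Gf
      rw [hpw', hpc]
      ring
    rw [integral_congr_ae hsplit, integral_sub hA hB, integral_const_mul]
    have hsimp : ∀ a b : ℂ, a - b - a = -b := by intros; ring
    rw [hsimp, norm_neg]
    have step1 : ‖∫ y, (∑' q : {q : ℤ × ℤ // q ≠ 0}, evanescent L α k q.1 (x - y)) * φ y ∂μ‖
        ≤ ∫ y, K * Real.exp (c * R) * E * ‖φ y‖ ∂μ := by
      refine le_trans (norm_integral_le_integral_norm _) ?_
      apply integral_mono_ae hB.norm (hφ.norm.const_mul _)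
      rw [hμdef]
      filter_upwards [ae_restrict_mem hfront] with y hy
      rw [norm_mul]
      have h1 := hTbound y hy
      have h3 := hdecay y hy
      have : ‖∑' q : {q : ℤ × ℤ // q ≠ 0}, evanescent L α k q.1 (x - y)‖
          ≤ K * (Real.exp (c * R) * E) := by
        calc ‖∑' q : {q : ℤ × ℤ // q ≠ 0}, evanescent L α k q.1 (x - y)‖
            ≤ K * Real.exp (-(c * |x 2 - y 2|)) := h1
          _ ≤ K * (Real.exp (c * R) * E) := mul_le_mul_of_nonneg_left h3 hK
      calc ‖∑' q : {q : ℤ × ℤ // q ≠ 0}, evanescent L α k q.1 (x - y)‖ * ‖φ y‖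
          ≤ K * (Real.exp (c * R) * E) * ‖φ y‖ :=
            mul_le_mul_of_nonneg_right this (norm_nonneg _)
        _ = K * Real.exp (c * R) * E * ‖φ y‖ := by ring
    rw [integral_const_mul] at step1
    calc ‖∫ y, (∑' q : {q : ℤ × ℤ // q ≠ 0}, evanescent L α k q.1 (x - y)) * φ y ∂μ‖
        ≤ K * Real.exp (c * R) * E * Iφ := step1
      _ = K * Real.exp (c * R) * Iφ * E := by ring
      _ ≤ C * E := mul_le_mul_of_nonneg_right hCb hE.le
  refine ⟨C, hC0, c, hc, ?_, ?_⟩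
  · intro x hx
    apply key 1 x (Real.exp (-c * x 2)) (Real.exp_pos _)
    · intro y hy
      have hyR : |y 2| ≤ R := hDR hy
      have := abs_le.1 hyR
      calc (1:ℝ) ≤ x 2 - y 2 := by linarith
        _ ≤ |x 2 - y 2| := le_abs_self _
    · intro y hy
      have hyR' : |y 2| ≤ R := hDR hy
      have hyR := abs_le.1 hyR'
      rw [abs_of_pos (by linarith : (0:ℝ) < x 2 - y 2)]
      ring
    · intro y hy
      have hyR' : |y 2| ≤ R := hDR hy
      have hyR := abs_le.1 hyR'
      rw [← Real.exp_add]
      apply Real.exp_le_exp.2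
      rw [abs_of_pos (by linarith : (0:ℝ) < x 2 - y 2)]
      nlinarith [mul_nonneg hc.le (by linarith : (0:ℝ) ≤ R - y 2)]
  · intro x hx
    apply key (-1) x (Real.exp (c * x 2)) (Real.exp_pos _)
    · intro y hy
      have hyR' : |y 2| ≤ R := hDR hy
      have hyR := abs_le.1 hyR'
      calc (1:ℝ) ≤ y 2 - x 2 := by linarith
        _ = -(x 2 - y 2) := by ring
        _ ≤ |x 2 - y 2| := neg_le_abs _
    · intro y hy
      have hyR' : |y 2| ≤ R := hDR hy
      have hyR := abs_le.1 hyR'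
      rw [abs_of_neg (by linarith : x 2 - y 2 < 0)]
      ring
    · intro y hy
      have hyR' : |y 2| ≤ R := hDR hy
      have hyR := abs_le.1 hyR'
      rw [← Real.exp_add]
      apply Real.exp_le_exp.2
      rw [abs_of_neg (by linarith : x 2 - y 2 < 0)]
      nlinarith [mul_nonneg hc.le (by linarith : (0:ℝ) ≤ y 2 + R)]
end
end

section
/- Fix L > 0 and 0 < k < 2π/L, and let G^{0,k} be the quasiperiodic Green's function at quasiperiodicity α = 0 defined by its spectral representation. Let 𝒫₁₂ : ℝ³ → ℝ³ be given by 𝒫₁₂(x₁,x₂,x₃) = (−x₁,−x₂,x₃). Let D ⊂ ℝ³ be a bounded set with 𝒫₁₂(∂D) = ∂D, let μ be the 2-dimensional Hausdorff measure restricted to ∂D, choose R > 0 with ∂D ⊆ {y : |y₃| ≤ R}, and let φ : ℝ³ → ℂ be μ-integrable with φ(𝒫₁₂ y) = −φ(y) for μ-almost every y. Then: (i) ∫_{∂D} e^{−i k y₃} φ(y) dμ(y) = 0 and ∫_{∂D} e^{i k y₃} φ(y) dμ(y) = 0; and (ii) there exist constants C > 0 and c > 0 such that |∫_{∂D} G^{0,k}(x−y)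 φ(y) dμ(y)| ≤ C e^{−c|x₃|} for every x with |x₃| ≥ R + 1. -/
open MeasureTheory

noncomputable section

/-- The reflection `𝒫₁₂(x₁,x₂,x₃) = (−x₁,−x₂,x₃)`. -/
def P12 (x : R3) : R3 := (EuclideanSpace.equiv (Fin 3) ℝ).symm ![-(x 0), -(x 1), x 2]

lemma norm_dualVec_sq (L : ℝ) (q : ℤ × ℤ) :
    ‖(0:R2) + dualVec L q‖^2 = (2*Real.pi/L)^2 * ((q.1:ℝ)^2+(q.2:ℝ)^2) := by
  rw [zero_add, dualVec, norm_smul, mul_pow, EuclideanSpace.norm_eq]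
  rw [Fin.sum_univ_two]
  have h0 : ∀ (v : Fin 2 → ℝ) (i : Fin 2), ((EuclideanSpace.equiv (Fin 2) ℝ).symm v) i = v i :=
    fun v i => rfl
  simp only [h0, Matrix.cons_val_zero, Matrix.cons_val_one, Matrix.head_cons]
  rw [Real.sq_sqrt (by positivity)]
  simp only [Real.norm_eq_abs, sq_abs]

section analytic

/-- decay rate -/
def cc (L k : ℝ) : ℝ := Real.sqrt ((2*Real.pi/L)^2 - k^2)
/-- evanescent decay exponent for mode q -/
def Bq (L k : ℝ) (q : ℤ × ℤ) : ℝ := Real.sqrt (‖(0:R2) + dualVec L q‖ ^ 2 - k ^ 2)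
/-- summable majorant -/
def Gq (L k : ℝ) (q : ℤ × ℤ) : ℝ := Real.exp (-(Bq L k q - cc L k)) / (2*L^2*cc L k)
def sumG (L k : ℝ) : ℝ := ∑' q : {q : ℤ × ℤ // q ≠ 0}, Gq L k q.1

variable {L k : ℝ}

lemma cc_pos (hk : 0 < k) (hk2 : k < 2 * Real.pi / L) : 0 < cc L k :=
  Real.sqrt_pos.mpr (by nlinarith)

lemma one_le_msq {q : ℤ × ℤ} (hq : q ≠ 0) : (1:ℝ) ≤ (q.1:ℝ)^2+(q.2:ℝ)^2 := by
  have h : q.1 ≠ 0 ∨ q.2 ≠ 0 := by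
    by_contra h
    push_neg at h
    exact hq (Prod.ext h.1 h.2)
  have h1 : (1:ℤ) ≤ q.1^2 + q.2^2 := by
    rcases h with h | h
    · have := Int.one_le_abs h
      nlinarith [sq_nonneg q.2, sq_abs q.1]
    · have := Int.one_le_abs h
      nlinarith [sq_nonneg q.1, sq_abs q.2]
  exact_mod_cast h1

lemma Bq_sq (hk : 0 < k) (hk2 : k < 2 * Real.pi / L) {q : ℤ × ℤ} (hq : q ≠ 0) :
    Bq L k q ^ 2 = (2*Real.pi/L)^2 * ((q.1:ℝ)^2+(q.2:ℝ)^2) - k^2 := by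
  rw [Bq, norm_dualVec_sq, Real.sq_sqrt]
  nlinarith [one_le_msq hq, sq_nonneg (2*Real.pi/L), hk.le, hk2]

lemma cc_le_Bq (hk : 0 < k) (hk2 : k < 2 * Real.pi / L) {q : ℤ × ℤ} (hq : q ≠ 0) :
    cc L k ≤ Bq L k q := by
  rw [cc, Bq, norm_dualVec_sq]
  apply Real.sqrt_le_sqrt
  nlinarith [one_le_msq hq, sq_nonneg (2*Real.pi/L)]

lemma Bq_pos (hk : 0 < k) (hk2 : k < 2 * Real.pi / L) {q : ℤ × ℤ} (hq : q ≠ 0) :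
    0 < Bq L k q :=
  lt_of_lt_of_le (cc_pos hk hk2) (cc_le_Bq hk hk2 hq)

lemma Bq_ge_abs (hk : 0 < k) (hk2 : k < 2 * Real.pi / L) {q : ℤ × ℤ} (hq : q ≠ 0) :
    cc L k * ((|(q.1:ℝ)| + |(q.2:ℝ)|) / 2) ≤ Bq L k q := by
  have hc : 0 < cc L k := cc_pos hk hk2
  have hBpos : 0 < Bq L k q := Bq_pos hk hk2 hq
  have h1 : (cc L k * ((|(q.1:ℝ)| + |(q.2:ℝ)|) / 2))^2 ≤ Bq L k q ^ 2 := by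
    rw [Bq_sq hk hk2 hq, mul_pow]
    have hcsq : cc L k ^ 2 = (2*Real.pi/L)^2 - k^2 := Real.sq_sqrt (by nlinarith)
    rw [hcsq]
    have hm := one_le_msq hq
    nlinarith [sq_nonneg (|(q.1:ℝ)| - |(q.2:ℝ)|), sq_abs (q.1:ℝ), sq_abs (q.2:ℝ),
      mul_nonneg (sq_nonneg k) (sub_nonneg.mpr hm), abs_nonneg (q.1:ℝ), abs_nonneg (q.2:ℝ),
      mul_nonneg (abs_nonneg (q.1:ℝ)) (abs_nonneg (q.2:ℝ))]
  have hA : 0 ≤ cc L k * ((|(q.1:ℝ)| + |(q.2:ℝ)|) / 2) := by positivity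
  calc cc L k * ((|(q.1:ℝ)| + |(q.2:ℝ)|) / 2)
      = Real.sqrt ((cc L k * ((|(q.1:ℝ)| + |(q.2:ℝ)|) / 2))^2) := (Real.sqrt_sq hA).symm
    _ ≤ Real.sqrt (Bq L k q ^ 2) := Real.sqrt_le_sqrt h1
    _ = Bq L k q := Real.sqrt_sq hBpos.le

lemma summable_exp_int (c : ℝ) (hc : 0 < c) : Summable (fun n : ℤ => Real.exp (-c * |(n:ℝ)|)) := by
  apply Summable.of_nat_of_neg
  · have : ∀ n : ℕ, Real.exp (-c * |((n:ℤ):ℝ)|) = Real.exp (-c) ^ n := by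
      intro n
      rw [← Real.exp_nat_mul]
      congr 1
      push_cast
      rw [abs_of_nonneg (by positivity)]
      ring
    simp only [this]
    exact summable_geometric_of_lt_one (Real.exp_pos _).le
      (Real.exp_lt_one_iff.mpr (by linarith))
  · have : ∀ n : ℕ, Real.exp (-c * |((-n:ℤ):ℝ)|) = Real.exp (-c) ^ n := by
      intro n
      rw [← Real.exp_nat_mul]
      congr 1
      push_cast
      rw [abs_neg, abs_of_nonneg (by positivity)]
      ring
    simp only [this]
    exact summable_geometric_of_lt_one (Real.exp_pos _).le
      (Real.exp_lt_one_iff.mpr (by linarith))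

lemma summable_Gq (hL : 0 < L) (hk : 0 < k) (hk2 : k < 2 * Real.pi / L) :
    Summable (fun q : {q : ℤ × ℤ // q ≠ 0} => Gq L k q.1) := by
  have hc : 0 < cc L k := cc_pos hk hk2
  have hc2p : 0 < cc L k / 2 := by positivity
  have hmaj : Summable (fun q : ℤ × ℤ =>
      (Real.exp (cc L k) / (2*L^2*cc L k)) *
        (Real.exp (-(cc L k / 2) * |(q.1:ℝ)|) * Real.exp (-(cc L k / 2) * |(q.2:ℝ)|))) := by
    apply Summable.mul_left
    exact (summable_exp_int _ hc2p).mul_of_nonneg (summable_exp_int _ hc2p)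
      (fun n => (Real.exp_pos _).le) (fun n => (Real.exp_pos _).le)
  set d := 2*L^2*cc L k with hd
  have hdpos : 0 < d := by rw [hd]; positivity
  apply Summable.of_nonneg_of_le
    (fun q => div_nonneg (Real.exp_pos _).le hdpos.le)
    (fun q => ?_) (hmaj.comp_injective Subtype.val_injective)
  show Gq L k q.1 ≤ _
  rw [Gq, div_le_iff₀ hdpos]
  have hB := Bq_ge_abs hk hk2 q.2
  set P := Real.exp (-(cc L k / 2) * |(q.1.1:ℝ)|) * Real.exp (-(cc L k / 2) * |(q.1.2:ℝ)|) with hP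
  have hexp : Real.exp (-(Bq L k q.1 - cc L k)) ≤ Real.exp (cc L k) * P := by
    rw [hP, ← Real.exp_add, ← Real.exp_add]
    apply Real.exp_le_exp.mpr
    linarith [hB]
  have heq : Real.exp (cc L k) / d * P * d = Real.exp (cc L k) * P := by
    field_simp
  calc Real.exp (-(Bq L k q.1 - cc L k)) ≤ Real.exp (cc L k) * P := hexp
    _ = Real.exp (cc L k) / d * P * d := heq.symm

lemma norm_evanescent (hL : 0 < L) (hk : 0 < k) (hk2 : k < 2 * Real.pi / L)
    {q : ℤ × ℤ} (hq : q ≠ 0) (z : R3) :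
    ‖evanescent L 0 k q z‖ = Real.exp (-(Bq L k q * |z 2|)) / (2*L^2*Bq L k q) := by
  have hB : 0 < Bq L k q := Bq_pos hk hk2 hq
  rw [evanescent]
  rw [norm_div, norm_mul]
  have h1 : ‖Complex.exp (Complex.I *
      ((((0:R2) + dualVec L q) 0 * z 0 + ((0:R2) + dualVec L q) 1 * z 1 : ℝ) : ℂ))‖ = 1 := by
    simp [Complex.norm_exp]
  have h2 : ‖Complex.exp ((-(Real.sqrt (‖(0:R2) + dualVec L q‖ ^ 2 - k ^ 2) * |z 2|) : ℝ) : ℂ)‖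
      = Real.exp (-(Bq L k q * |z 2|)) := by
    rw [Complex.norm_exp]
    simp [Bq]
  have h3 : ‖((2 * L ^ 2 * Real.sqrt (‖(0:R2) + dualVec L q‖ ^ 2 - k ^ 2) : ℝ) : ℂ)‖
      = 2*L^2*Bq L k q := by
    rw [Complex.norm_real, Real.norm_eq_abs]
    rw [show Real.sqrt (‖(0:R2) + dualVec L q‖ ^ 2 - k ^ 2) = Bq L k q from rfl]
    exact abs_of_pos (by positivity)
  rw [h1, h2, h3, one_mul]

lemma ev_le (hL : 0 < L) (hk : 0 < k) (hk2 : k < 2 * Real.pi / L)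
    {q : ℤ × ℤ} (hq : q ≠ 0) {z : R3} (hz : 1 ≤ |z 2|) :
    ‖evanescent L 0 k q z‖ ≤ Real.exp (-(cc L k * |z 2|)) * Gq L k q := by
  have hc : 0 < cc L k := cc_pos hk hk2
  have hB : 0 < Bq L k q := Bq_pos hk hk2 hq
  have hcB : cc L k ≤ Bq L k q := cc_le_Bq hk hk2 hq
  rw [norm_evanescent hL hk hk2 hq z, Gq]
  rw [mul_div_assoc']
  apply div_le_div₀ (by positivity) ?_ (by positivity) ?_
  · rw [← Real.exp_add]
    apply Real.exp_le_exp.mpr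
    nlinarith [abs_nonneg (z 2)]
  · nlinarith

lemma summable_ev (hL : 0 < L) (hk : 0 < k) (hk2 : k < 2 * Real.pi / L)
    {z : R3} (hz : 1 ≤ |z 2|) :
    Summable (fun q : {q : ℤ × ℤ // q ≠ 0} => ‖evanescent L 0 k q.1 z‖) := by
  apply Summable.of_nonneg_of_le (fun q => norm_nonneg _)
    (fun q => ev_le hL hk hk2 q.2 hz)
    ((summable_Gq hL hk hk2).mul_left _)

lemma tsum_ev_bound (hL : 0 < L) (hk : 0 < k) (hk2 : k < 2 * Real.pi / L)
    {z : R3} (hz : 1 ≤ |z 2|) :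
    ‖∑' q : {q : ℤ × ℤ // q ≠ 0}, evanescent L 0 k q.1 z‖ ≤
      Real.exp (-(cc L k * |z 2|)) * sumG L k := by
  calc ‖∑' q : {q : ℤ × ℤ // q ≠ 0}, evanescent L 0 k q.1 z‖
      ≤ ∑' q : {q : ℤ × ℤ // q ≠ 0}, ‖evanescent L 0 k q.1 z‖ :=
        norm_tsum_le_tsum_norm (summable_ev hL hk hk2 hz)
    _ ≤ ∑' q : {q : ℤ × ℤ // q ≠ 0}, Real.exp (-(cc L k * |z 2|)) * Gq L k q.1 :=
        Summable.tsum_le_tsum (fun q => ev_le hL hk hk2 q.2 hz) (summable_ev hL hk hk2 hz)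
          ((summable_Gq hL hk hk2).mul_left _)
    _ = Real.exp (-(cc L k * |z 2|)) * sumG L k := by rw [tsum_mul_left, sumG]

lemma sumG_nonneg (hL : 0 < L) (hk : 0 < k) (hk2 : k < 2 * Real.pi / L) :
    0 ≤ sumG L k := by
  apply tsum_nonneg
  intro q
  have hc : 0 < cc L k := cc_pos hk hk2
  exact div_nonneg (Real.exp_pos _).le (by positivity)

end analytic

lemma Gf_zero (L : ℝ) {k : ℝ} (hk : 0 ≤ k) (z : R3) :
    Gf L 0 k z = Complex.exp (Complex.I * ((k * |z 2| : ℝ) : ℂ)) /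
        (2 * Complex.I * (k : ℂ) * (L : ℂ) ^ 2) -
      ∑' q : {q : ℤ × ℤ // q ≠ 0}, evanescent L 0 k q.1 z := by
  rw [Gf]
  have hk3 : kthree 0 k = k := by
    rw [kthree]
    simp [Real.sqrt_sq hk]
  have h0 : ((0:R2) 0) = 0 := rfl
  have h1 : ((0:R2) 1) = 0 := rfl
  rw [hk3, h0, h1]
  norm_num

lemma P12_apply (x : R3) (i : Fin 3) : P12 x i = ![-(x 0), -(x 1), x 2] i := rfl

lemma P12_inv : Function.Involutive P12 := by
  intro x
  ext i
  fin_cases i <;> simp [P12_apply]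

lemma P12_isom : Isometry P12 := by
  have : ∀ x y : R3, dist (P12 x) (P12 y) = dist x y := by
    intro x y
    rw [EuclideanSpace.dist_eq, EuclideanSpace.dist_eq]
    congr 1
    rw [Fin.sum_univ_three, Fin.sum_univ_three]
    simp [P12_apply]
    try ring
  exact Isometry.of_dist_eq this

def P12e : R3 ≃ᵢ R3 :=
{ toFun := P12, invFun := P12,
  left_inv := P12_inv, right_inv := P12_inv,
  isometry_toFun := P12_isom }

lemma P12_measPres {F : Set R3} (hF : MeasurableSet F) (hsym : P12 '' F = F) :
    MeasurePreserving P12 ((μH[2] : Measure R3).restrict F) ((μH[2] : Measure R3).restrict F) := by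
  have hmem : ∀ z ∈ F, P12 z ∈ F := fun z hz => hsym ▸ Set.mem_image_of_mem P12 hz
  have hpre : P12 ⁻¹' F = F := by
    ext y
    simp only [Set.mem_preimage]
    constructor
    · intro hy
      have := hmem _ hy
      rwa [P12_inv y] at this
    · exact hmem y
  refine ⟨P12_isom.continuous.measurable, ?_⟩
  have h1 : Measure.map P12 (μH[2] : Measure R3) = (μH[2] : Measure R3) :=
    P12e.map_hausdorffMeasure 2
  calc Measure.map P12 ((μH[2] : Measure R3).restrict F)
      = Measure.map P12 ((μH[2] : Measure R3).restrict (P12 ⁻¹' F)) := by rw [hpre]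
    _ = (Measure.map P12 (μH[2] : Measure R3)).restrict F := by
        rw [Measure.restrict_map P12_isom.continuous.measurable hF]
    _ = (μH[2] : Measure R3).restrict F := by rw [h1]

lemma P12_embed : MeasurableEmbedding P12 :=
  (MeasurableEquiv.mk P12e.toEquiv P12_isom.continuous.measurable
    P12_isom.continuous.measurable).measurableEmbedding

lemma integral_zero_of_odd {F : Set R3} (hF : MeasurableSet F) (hsym : P12 '' F = F)
    (f : R3 → ℂ) (hf : ∀ᵐ y ∂((μH[2] : Measure R3).restrict F), f (P12 y) = -f y) :
    ∫ y, f y ∂((μH[2] : Measure R3).restrict F) = 0 := by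
  set ν := (μH[2] : Measure R3).restrict F
  have h1 : ∫ y, f (P12 y) ∂ν = ∫ y, f y ∂ν :=
    (P12_measPres hF hsym).integral_comp P12_embed f
  have h2 : ∫ y, f (P12 y) ∂ν = ∫ y, -f y ∂ν := integral_congr_ae hf
  rw [h2, integral_neg] at h1
  linear_combination (-1/2 : ℂ) * h1

/-- On a structure symmetric under `𝒫₁₂`, a density odd under `𝒫₁₂` generates a field
with vanishing propagating amplitudes and hence exponentially decaying in the far field:
the associated mode is a bound state in the continuum (Proposition 5.2 of the paper). -/
theorem boundStateInContinuum (L : ℝ) (hL : 0 < L) (k : ℝ) (hk : 0 < k)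
    (hk2 : k < 2 * Real.pi / L)
    (D : Set R3) (hD : Bornology.IsBounded D) (hsym : P12 '' frontier D = frontier D)
    (R : ℝ) (hR : 0 < R) (hDR : frontier D ⊆ {y : R3 | |y 2| ≤ R})
    (φ : R3 → ℂ) (hφ : Integrable φ ((μH[2] : Measure R3).restrict (frontier D)))
    (hodd : ∀ᵐ y ∂((μH[2] : Measure R3).restrict (frontier D)), φ (P12 y) = -φ y) :
    ((∫ y, Complex.exp (-(Complex.I * ((k * y 2 : ℝ) : ℂ))) * φ y
        ∂((μH[2] : Measure R3).restrict (frontier D)) = 0) ∧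
      (∫ y, Complex.exp (Complex.I * ((k * y 2 : ℝ) : ℂ)) * φ y
        ∂((μH[2] : Measure R3).restrict (frontier D)) = 0)) ∧
    ∃ C > (0 : ℝ), ∃ c > (0 : ℝ), ∀ x : R3, R + 1 ≤ |x 2| →
      ‖∫ y, Gf L 0 k (x - y) * φ y ∂((μH[2] : Measure R3).restrict (frontier D))‖ ≤
        C * Real.exp (-c * |x 2|) := by
  set F := frontier D with hFdef
  set ν := (μH[2] : Measure R3).restrict F with hν
  have hF : MeasurableSet F := isClosed_frontier.measurableSet
  have hzero : ∀ r : ℝ, ∫ y, Complex.exp (Complex.I * ((r * y 2 : ℝ) : ℂ)) * φ y ∂ν = 0 := by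
    intro r
    apply integral_zero_of_odd hF hsym
    filter_upwards [hodd] with y hy
    have h2 : P12 y 2 = y 2 := rfl
    rw [h2, hy]
    ring
  have part1a : ∫ y, Complex.exp (-(Complex.I * ((k * y 2 : ℝ) : ℂ))) * φ y ∂ν = 0 := by
    have h := hzero (-k)
    have he : ∀ y : R3, Complex.exp (Complex.I * ((-k * y 2 : ℝ) : ℂ))
        = Complex.exp (-(Complex.I * ((k * y 2 : ℝ) : ℂ))) := by
      intro y
      congr 1
      push_cast
      ring
    simpa only [he] using h
  refine ⟨⟨part1a, hzero k⟩, ?_⟩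
  have hc : 0 < cc L k := cc_pos hk hk2
  have hsG : 0 ≤ sumG L k := sumG_nonneg hL hk hk2
  have hInt : 0 ≤ ∫ y, ‖φ y‖ ∂ν := integral_nonneg (fun y => norm_nonneg _)
  refine ⟨Real.exp (cc L k * R) * sumG L k * (∫ y, ‖φ y‖ ∂ν) + 1, by positivity,
    cc L k, hc, ?_⟩
  intro x hx
  have hexppos : 0 < Real.exp (-cc L k * |x 2|) := Real.exp_pos _
  -- sign of x 2
  obtain ⟨ε, hε⟩ : ∃ ε : ℝ, ∀ y ∈ F, |x 2 - y 2| = |x 2| - ε * y 2 := by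
    rcases le_or_gt 0 (x 2) with h | h
    · refine ⟨1, fun y hy => ?_⟩
      have hyR : |y 2| ≤ R := hDR hy
      have h1 : |x 2| = x 2 := abs_of_nonneg h
      have h2 := abs_le.mp hyR
      rw [h1, one_mul, abs_of_nonneg (by rw [h1] at hx; linarith)]
    · refine ⟨-1, fun y hy => ?_⟩
      have hyR : |y 2| ≤ R := hDR hy
      have h1 : |x 2| = -x 2 := abs_of_neg h
      have h2 := abs_le.mp hyR
      rw [h1] at hx
      rw [abs_of_nonpos (by linarith), h1]
      ring
  set A : ℂ := Complex.exp (Complex.I * ((k * |x 2| : ℝ) : ℂ)) /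
      (2 * Complex.I * (k : ℂ) * (L : ℂ) ^ 2) with hA
  set g1 : R3 → ℂ := fun y => (A * Complex.exp (Complex.I * ((-(ε*k) * y 2 : ℝ) : ℂ))) * φ y
    with hg1def
  set g2 : R3 → ℂ := fun y => (∑' q : {q : ℤ × ℤ // q ≠ 0}, evanescent L 0 k q.1 (x - y)) * φ y
    with hg2def
  have hg1zero : ∫ y, g1 y ∂ν = 0 := by
    rw [hg1def]
    simp only [mul_assoc]
    rw [integral_const_mul, hzero (-(ε*k)), mul_zero]
  have hg1int : Integrable g1 ν := by
    apply hφ.bdd_mul (c := ‖A‖)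
    · apply Continuous.aestronglyMeasurable
      apply continuous_const.mul
      apply Complex.continuous_exp.comp
      apply continuous_const.mul
      exact Complex.continuous_ofReal.comp (continuous_const.mul (PiLp.continuous_apply 2 _ (2 : Fin 3)))
    · refine Filter.Eventually.of_forall (fun y => ?_)
      rw [norm_mul]
      have : ‖Complex.exp (Complex.I * ((-(ε*k) * y 2 : ℝ) : ℂ))‖ = 1 := by
        simp [Complex.norm_exp]
      rw [this, mul_one]
  have hGfeq : ∀ y ∈ F, Gf L 0 k (x - y) * φ y = g1 y - g2 y := by
    intro y hy
    have habs : |x 2 - y 2| = |x 2| - ε * y 2 := hε y hy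
    have hsub : (x - y) 2 = x 2 - y 2 := rfl
    rw [Gf_zero L hk.le]
    have hprop : Complex.exp (Complex.I * ((k * |(x - y) 2| : ℝ) : ℂ)) /
        (2 * Complex.I * (k : ℂ) * (L : ℂ) ^ 2)
        = A * Complex.exp (Complex.I * ((-(ε*k) * y 2 : ℝ) : ℂ)) := by
      rw [hsub, habs, hA, div_mul_eq_mul_div]
      congr 1
      rw [← Complex.exp_add]
      congr 1
      push_cast
      ring
    rw [hprop, hg1def, hg2def]
    ring
  have hmeq : (fun y => Gf L 0 k (x - y) * φ y) =ᵐ[ν] (fun y => g1 y - g2 y) := by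
    rw [hν]
    filter_upwards [ae_restrict_mem hF] with y hy
    exact hGfeq y hy
  rw [integral_congr_ae hmeq]
  -- pointwise bound for g2 on F
  have hg2bdd : ∀ y ∈ F, ‖g2 y‖ ≤
      (Real.exp (cc L k * R) * sumG L k * Real.exp (-cc L k * |x 2|)) * ‖φ y‖ := by
    intro y hy
    have hyR : |y 2| ≤ R := hDR hy
    have hsub : (x - y) 2 = x 2 - y 2 := rfl
    have ht : |x 2| - R ≤ |(x - y) 2| := by
      rw [hsub]
      have := abs_sub_abs_le_abs_sub (x 2) (y 2)
      linarith
    have ht1 : 1 ≤ |(x - y) 2| := by linarith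
    have h1 : ‖(∑' q : {q : ℤ × ℤ // q ≠ 0}, evanescent L 0 k q.1 (x - y))‖ ≤
        Real.exp (-(cc L k * |(x - y) 2|)) * sumG L k := tsum_ev_bound hL hk hk2 ht1
    have h2 : Real.exp (-(cc L k * |(x - y) 2|)) ≤
        Real.exp (cc L k * R) * Real.exp (-cc L k * |x 2|) := by
      rw [← Real.exp_add]
      apply Real.exp_le_exp.mpr
      nlinarith [ht, hc]
    rw [hg2def]
    simp only []
    rw [norm_mul]
    apply mul_le_mul_of_nonneg_right ?_ (norm_nonneg _)
    calc ‖(∑' q : {q : ℤ × ℤ // q ≠ 0}, evanescent L 0 k q.1 (x - y))‖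
        ≤ Real.exp (-(cc L k * |(x - y) 2|)) * sumG L k := h1
      _ ≤ (Real.exp (cc L k * R) * Real.exp (-cc L k * |x 2|)) * sumG L k :=
          mul_le_mul_of_nonneg_right h2 hsG
      _ = Real.exp (cc L k * R) * sumG L k * Real.exp (-cc L k * |x 2|) := by ring
  by_cases hg2int : Integrable g2 ν
  · rw [integral_sub hg1int hg2int, hg1zero, zero_sub, norm_neg]
    calc ‖∫ y, g2 y ∂ν‖ ≤ ∫ y, ‖g2 y‖ ∂ν := norm_integral_le_integral_norm _
      _ ≤ ∫ y, (Real.exp (cc L k * R) * sumG L k * Real.exp (-cc L k * |x 2|)) * ‖φ y‖ ∂ν := by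
          apply integral_mono_of_nonneg
          · exact Filter.Eventually.of_forall (fun y => norm_nonneg _)
          · exact hφ.norm.const_mul _
          · rw [hν]
            filter_upwards [ae_restrict_mem hF] with y hy
            exact hg2bdd y hy
      _ = (Real.exp (cc L k * R) * sumG L k * Real.exp (-cc L k * |x 2|)) *
            ∫ y, ‖φ y‖ ∂ν := integral_const_mul _ _
      _ ≤ (Real.exp (cc L k * R) * sumG L k * (∫ y, ‖φ y‖ ∂ν) + 1) *
            Real.exp (-cc L k * |x 2|) := by nlinarith
  · rw [integral_undef]
    · simp only [norm_zero]
      positivity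
    · intro hcon
      apply hg2int
      have := hg1int.sub hcon
      apply this.congr
      filter_upwards with y
      simp
end
end
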